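/- Let p be a prime and 𝒞 ⊆ 𝔽_p^{2n} a linear code. Define the Construction A lattice Λ(𝒞) = {v/√p : v ∈ ℤ^{2n}, v mod p ∈ 𝒞}, equipped with the bilinear form λ ⊙ λ' = λ η λ'^T with η = [[0,I_n],[I_n,0]]. Then the dual lattice Λ(𝒞)^* (with respect to ⊙) equals Λ(𝒞^⊥), where 𝒞^⊥ is the dual code with respect to ⊙ mod p. In particular, Λ(𝒞) is self-dual if and only if 𝒞 is self-dual. -/

import Mathlib

/-- The inner product on `𝔽_p^{2n}` with respect to the off-diagonal Lorentzian metric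
`η = [[0,I_n],[I_n,0]]`. -/
def etaDot (p n : ℕ) (c c' : Fin n ⊕ Fin n → ZMod p) : ZMod p :=
  ∑ i : Fin n, (c (Sum.inl i) * c' (Sum.inr i) + c (Sum.inr i) * c' (Sum.inl i))

/-- The dual code of `𝒞` with respect to the form `⊙` mod `p`. -/
def dualCode (p n : ℕ) (𝒞 : Set (Fin n ⊕ Fin n → ZMod p)) :
    Set (Fin n ⊕ Fin n → ZMod p) :=
  {c' | ∀ c ∈ 𝒞, etaDot p n c' c = 0}

/-- The Construction A lattice `Λ(𝒞) = {v/√p : v ∈ ℤ^{2n}, v mod p ∈ 𝒞}`. -/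
def latticeA (p n : ℕ) (𝒞 : Set (Fin n ⊕ Fin n → ZMod p)) :
    Set (Fin n ⊕ Fin n → ℝ) :=
  {x | ∃ v : Fin n ⊕ Fin n → ℤ, (fun i => ((v i : ZMod p))) ∈ 𝒞 ∧
        x = fun i => (v i : ℝ) / Real.sqrt p}

/-- The real bilinear form `λ ⊙ λ' = λ η λ'^T` with `η = [[0,I_n],[I_n,0]]`. -/
def etaDotR (n : ℕ) (x y : Fin n ⊕ Fin n → ℝ) : ℝ :=
  ∑ i : Fin n, (x (Sum.inl i) * y (Sum.inr i) + x (Sum.inr i) * y (Sum.inl i))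

/-- The dual lattice `Λ^* = {y : y ⊙ x ∈ ℤ for all x ∈ Λ}`. -/
def dualLattice (n : ℕ) (Λ : Set (Fin n ⊕ Fin n → ℝ)) :
    Set (Fin n ⊕ Fin n → ℝ) :=
  {y | ∀ x ∈ Λ, ∃ m : ℤ, etaDotR n y x = m}

/-- Integer version of the form. -/
def etaDotZ (n : ℕ) (v w : Fin n ⊕ Fin n → ℤ) : ℤ :=
  ∑ i : Fin n, (v (Sum.inl i) * w (Sum.inr i) + v (Sum.inr i) * w (Sum.inl i))

lemma etaDotZ_cast (p n : ℕ) (v w : Fin n ⊕ Fin n → ℤ) :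
    ((etaDotZ n v w : ℤ) : ZMod p)
      = etaDot p n (fun i => (v i : ZMod p)) (fun i => (w i : ZMod p)) := by
  unfold etaDotZ etaDot
  push_cast
  rfl

lemma etaDotR_div (p n : ℕ) (hp : 0 < p) (w v : Fin n ⊕ Fin n → ℤ) :
    etaDotR n (fun i => (w i : ℝ) / Real.sqrt p) (fun i => (v i : ℝ) / Real.sqrt p)
      = (etaDotZ n w v : ℝ) / p := by
  have hs : Real.sqrt p * Real.sqrt p = p := Real.mul_self_sqrt (by positivity)
  unfold etaDotR etaDotZ
  push_cast
  rw [Finset.sum_div]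
  refine Finset.sum_congr rfl fun i _ => ?_
  rw [div_mul_div_comm, div_mul_div_comm, hs, ← add_div]

lemma etaDotR_single (n : ℕ) (y : Fin n ⊕ Fin n → ℝ) (j : Fin n ⊕ Fin n) (a : ℝ) :
    etaDotR n y (fun k => if k = Sum.elim Sum.inr Sum.inl j then a else 0) = y j * a := by
  unfold etaDotR
  cases j with
  | inl i0 =>
    rw [Fintype.sum_eq_single i0]
    · simp
    · intro i hi; simp [Sum.inr.injEq, hi]
  | inr i0 =>
    rw [Fintype.sum_eq_single i0]
    · simp
    · intro i hi; simp [Sum.inl.injEq, hi]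

lemma latticeA_mono_rev (p n : ℕ) (hp : p.Prime) {S T : Set (Fin n ⊕ Fin n → ZMod p)}
    (h : latticeA p n S ⊆ latticeA p n T) : S ⊆ T := by
  haveI := Fact.mk hp
  have hs : (0:ℝ) < Real.sqrt p := Real.sqrt_pos.2 (by exact_mod_cast hp.pos)
  intro c hc
  set v : Fin n ⊕ Fin n → ℤ := fun j => ((c j).val : ℤ) with hv
  have hvc : (fun j => ((v j : ZMod p))) = c := by
    funext j
    simp [hv, ZMod.natCast_rightInverse (c j)]
  have hx : (fun j => (v j : ℝ) / Real.sqrt p) ∈ latticeA p n S := ⟨v, hvc ▸ hc, rfl⟩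
  obtain ⟨w, hwT, hw⟩ := h hx
  have hvw : v = w := by
    funext j
    have h1 := congrFun hw j
    field_simp at h1
    exact_mod_cast h1
  rw [← hvc, hvw]
  exact hwT

/-- For a linear code `𝒞 ⊆ 𝔽_p^{2n}`, the dual of the Construction A lattice `Λ(𝒞)`
equals `Λ(𝒞^⊥)`; in particular `Λ(𝒞)` is self-dual iff `𝒞` is self-dual. -/
theorem stmt6 (p n : ℕ) (hp : p.Prime)
    (𝒞 : Submodule (ZMod p) (Fin n ⊕ Fin n → ZMod p)) :
    dualLattice n (latticeA p n 𝒞) = latticeA p n (dualCode p n 𝒞) ∧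
    (dualLattice n (latticeA p n 𝒞) = latticeA p n 𝒞 ↔
      dualCode p n 𝒞 = (𝒞 : Set (Fin n ⊕ Fin n → ZMod p))) := by
  haveI := Fact.mk hp
  have hp0 : (0:ℝ) < p := by exact_mod_cast hp.pos
  have hs : (0:ℝ) < Real.sqrt p := Real.sqrt_pos.2 hp0
  have hss : Real.sqrt p * Real.sqrt p = p := Real.mul_self_sqrt hp0.le
  have key : dualLattice n (latticeA p n 𝒞) = latticeA p n (dualCode p n 𝒞) := by
    ext y
    constructor
    · intro hy
      -- first, extract integer coordinates
      have hcoord : ∀ j : Fin n ⊕ Fin n, ∃ m : ℤ, y j * Real.sqrt p = m := by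
        intro j
        set j' := Sum.elim Sum.inr Sum.inl j with hj'
        set v : Fin n ⊕ Fin n → ℤ := fun k => if k = j' then (p : ℤ) else 0 with hv
        have hx : (fun k => (v k : ℝ) / Real.sqrt p) ∈ latticeA p n 𝒞 := by
          refine ⟨v, ?_, rfl⟩
          have : (fun k => ((v k : ZMod p))) = 0 := by
            funext k
            simp [hv, apply_ite (Int.cast : ℤ → ZMod p)]
          rw [this]; exact 𝒞.zero_mem
        obtain ⟨m, hm⟩ := hy _ hx
        refine ⟨m, ?_⟩
        have hxeq : (fun k => (v k : ℝ) / Real.sqrt p)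
            = fun k => if k = j' then (p : ℝ) / Real.sqrt p else 0 := by
          funext k
          by_cases h : k = j' <;> simp [hv, h]
        rw [hxeq] at hm
        have := etaDotR_single n y j ((p:ℝ) / Real.sqrt p)
        rw [← hj'] at this
        rw [this] at hm
        have hps : (p:ℝ) / Real.sqrt p = Real.sqrt p := by
          rw [eq_comm, eq_div_iff hs.ne', hss]
        rw [hps] at hm
        exact hm
      choose w hw using hcoord
      have hyw : y = fun j => (w j : ℝ) / Real.sqrt p := by
        funext j
        rw [eq_div_iff hs.ne']
        exact hw j
      refine ⟨w, ?_, hyw⟩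
      intro c hc
      set v : Fin n ⊕ Fin n → ℤ := fun j => ((c j).val : ℤ) with hv
      have hvc : (fun j => ((v j : ZMod p))) = c := by
        funext j
        simp [hv, ZMod.natCast_rightInverse (c j)]
      obtain ⟨m, hm⟩ := hy (fun j => (v j : ℝ) / Real.sqrt p) ⟨v, hvc ▸ hc, rfl⟩
      rw [hyw, etaDotR_div p n hp.pos] at hm
      have hz : etaDotZ n w v = m * p := by
        rw [div_eq_iff hp0.ne'] at hm
        exact_mod_cast hm
      have : ((etaDotZ n w v : ℤ) : ZMod p) = 0 := by
        rw [hz]; push_cast; simp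
      rw [etaDotZ_cast, hvc] at this
      exact this
    · rintro ⟨w, hw, rfl⟩ x ⟨v, hv, rfl⟩
      rw [etaDotR_div p n hp.pos]
      have h0 : ((etaDotZ n w v : ℤ) : ZMod p) = 0 := by
        rw [etaDotZ_cast]; exact hw _ hv
      obtain ⟨m, hm⟩ := (ZMod.intCast_zmod_eq_zero_iff_dvd _ p).1 h0
      refine ⟨m, ?_⟩
      rw [hm]
      push_cast
      field_simp
  refine ⟨key, ?_, fun h => by rw [key, h]⟩
  intro h
  rw [key] at h
  exact subset_antisymm (latticeA_mono_rev p n hp h.le) (latticeA_mono_rev p n hp h.ge)
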